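/- Let I be a nonempty finite set of items all having the same reward r > 0, with sizes q_i > 0, and let s_1 ≤ s_2 ≤ … ≤ s_l denote the sizes sorted in nondecreasing order with prefix sums σ_k = s_1 + … + s_k. Then for every c ≥ 0, f_I(c) = r·max{ k : σ_k ≤ c } (with max ∅ = 0); consequently the restriction of f_I to [0,∞) is a nondecreasing step function whose set of values is {0, r, 2r, …, lr} (r-uniform) and whose breakpoints σ_1 < σ_2 < … satisfy σ_{k+2} − σ_{k+1} ≥ σ_{k+1} − σ_k for all applicable k (pseudo-concave). -/

import Mathlib

open scoped BigOperators

lemma liftLeMap {α β : Type*} (f : α → β) :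
    ∀ (m : Multiset β) (s : Multiset α), m ≤ s.map f → ∃ u ≤ s, u.map f = m := by
  classical
  intro m
  induction m using Multiset.induction_on with
  | empty => intro s _; exact ⟨0, Multiset.zero_le s, rfl⟩
  | cons b m ih =>
    intro s h
    have hb : b ∈ s.map f := Multiset.mem_of_le h (Multiset.mem_cons_self b m)
    obtain ⟨a, ha, rfl⟩ := Multiset.mem_map.1 hb
    have h' : m ≤ (s.erase a).map f := by
      rw [Multiset.map_erase_of_mem f s ha]
      have := Multiset.erase_le_erase (f a) h
      simpa using this
    obtain ⟨u, hu, hmu⟩ := ih (s.erase a) h'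
    refine ⟨a ::ₘ u, ?_, by rw [Multiset.map_cons, hmu]⟩
    calc a ::ₘ u ≤ a ::ₘ s.erase a := Multiset.cons_le_cons a hu
    _ = s := Multiset.cons_erase ha

lemma takeSumLeSublist : ∀ {t L : List ℝ}, List.Sublist t L → L.Pairwise (· ≤ ·) →
    (L.take t.length).sum ≤ t.sum := by
  intro t L h
  induction h with
  | slnil => intro _; simp
  | @cons l₁ l₂ a h ih =>
    intro hs
    have ih' := ih hs.of_cons
    refine le_trans ?_ ih'
    cases hn : l₁.length with
    | zero => simp
    | succ n =>
      have hlen : n < l₂.length := by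
        have := h.length_le
        omega
      rw [List.take_succ_cons, List.sum_cons, List.sum_take_succ _ n hlen]
      have hmem : l₂[n] ∈ l₂ := List.getElem_mem hlen
      have := List.rel_of_pairwise_cons hs hmem
      linarith
  | @cons_cons l₁ l₂ a h ih =>
    intro hs
    have := ih hs.of_cons
    simpa using this

/-- Knapsack step function of a finite set `I ⊆ ℕ` of items with rewards `r` and sizes `q`:
`f_I(c) = max { ∑_{i ∈ S} r_i : S ⊆ I, ∑_{i ∈ S} q_i ≤ c }` for `c ≥ 0`, `-∞` for `c < 0`. -/
noncomputable def knapFnL (I : Finset ℕ) (r q : ℕ → ℝ) : ℝ → EReal :=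
  fun cap =>
    if cap < 0 then ⊥
    else ((I.powerset.filter fun S => (∑ i ∈ S, q i) ≤ cap).sup
      fun S => ((∑ i ∈ S, r i : ℝ) : EReal))

/-- For a nonempty set `I` of items all of reward `rv > 0` with positive sizes, listing the
sizes in nondecreasing order `L` with prefix sums `σ_k = (L.take k).sum`, the knapsack
function satisfies `f_I(c) = rv · max{k : σ_k ≤ c}` for `c ≥ 0`; hence it is nondecreasing
on `[0,∞)`, its set of values on `[0,∞)` is `{0, rv, 2·rv, …, L.length·rv}` (`rv`-uniform),
and its breakpoints are pseudo-concave: `σ_{k+2} - σ_{k+1} ≥ σ_{k+1} - σ_k`. -/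
theorem stmt15 (I : Finset ℕ) (hI : I.Nonempty) (r q : ℕ → ℝ) (rv : ℝ) (hrv : 0 < rv)
    (hr : ∀ i ∈ I, r i = rv) (hq : ∀ i ∈ I, 0 < q i)
    (L : List ℝ) (hsort : L.Pairwise (· ≤ ·)) (hperm : (L : Multiset ℝ) = I.val.map q) :
    (∀ c : ℝ, 0 ≤ c → ∀ hc : ((Finset.range (L.length + 1)).filter
        fun k => (L.take k).sum ≤ c).Nonempty,
      knapFnL I r q c =
        ((rv * ((((Finset.range (L.length + 1)).filter
          fun k => (L.take k).sum ≤ c).max' hc : ℕ) : ℝ) : ℝ) : EReal)) ∧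
    (∀ a b : ℝ, 0 ≤ a → a ≤ b → knapFnL I r q a ≤ knapFnL I r q b) ∧
    (knapFnL I r q '' Set.Ici (0 : ℝ) =
      {v : EReal | ∃ k ≤ L.length, v = ((rv * (k : ℝ) : ℝ) : EReal)}) ∧
    (∀ k : ℕ, k + 2 ≤ L.length →
      (L.take (k + 1)).sum - (L.take k).sum ≤ (L.take (k + 2)).sum - (L.take (k + 1)).sum) := by
  have hcard : I.card = L.length := by
    have := congrArg Multiset.card hperm
    simpa using this.symm
  have hpos : ∀ x ∈ L, 0 < x := by
    intro x hx
    have hx' : x ∈ (L : Multiset ℝ) := hx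
    rw [hperm] at hx'
    obtain ⟨i, hi, rfl⟩ := Multiset.mem_map.1 hx'
    exact hq i hi
  have hpre : ∀ S : Finset ℕ, S ⊆ I → (L.take S.card).sum ≤ ∑ i ∈ S, q i := by
    intro S hS
    have h1 : S.val.map q ≤ (L : Multiset ℝ) := by
      rw [hperm]; exact Multiset.map_le_map (Finset.val_le_iff.2 hS)
    obtain ⟨s', hs'⟩ := Quotient.exists_rep (S.val.map q)
    rw [← hs'] at h1
    obtain ⟨t, htp, hts⟩ := Multiset.coe_le.1 h1
    have hlen : t.length = S.card := by
      have := congrArg Multiset.card hs'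
      simpa [htp.length_eq] using this
    have hsum : t.sum = ∑ i ∈ S, q i := by
      have := congrArg Multiset.sum hs'
      simpa [htp.sum_eq] using this
    have := takeSumLeSublist hts hsort
    rwa [hlen, hsum] at this
  have hex : ∀ k, k ≤ L.length →
      ∃ S : Finset ℕ, S ⊆ I ∧ S.card = k ∧ (∑ i ∈ S, q i) = (L.take k).sum := by
    intro k hk
    have hsub : ((L.take k : List ℝ) : Multiset ℝ) ≤ I.val.map q := by
      rw [← hperm]
      exact Multiset.coe_le.2 (L.take_sublist k).subperm
    obtain ⟨u, hu, hmap⟩ := liftLeMap q _ _ hsub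
    have hnodup : u.Nodup := Multiset.nodup_of_le hu I.nodup
    refine ⟨⟨u, hnodup⟩, Finset.val_le_iff.1 hu, ?_, ?_⟩
    · have := congrArg Multiset.card hmap
      simpa [Nat.min_eq_left hk] using this
    · have := congrArg Multiset.sum hmap
      simpa using this
  have hsumr : ∀ S : Finset ℕ, S ⊆ I → (∑ i ∈ S, r i) = rv * S.card := by
    intro S hS
    rw [Finset.sum_congr rfl fun i hi => hr i (hS hi), Finset.sum_const, nsmul_eq_mul, mul_comm]
  have htake_mono : ∀ j k : ℕ, j ≤ k → (L.take j).sum ≤ (L.take k).sum := by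
    intro j k hjk
    have h1 : (L.take k).take j = L.take j := by
      rw [List.take_take, Nat.min_eq_left hjk]
    have h2 := List.sum_take_add_sum_drop (L.take k) j
    have h3 : 0 ≤ ((L.take k).drop j).sum :=
      List.sum_nonneg fun x hx =>
        (hpos x (List.mem_of_mem_take (List.mem_of_mem_drop hx))).le
    rw [h1] at h2
    linarith
  have hstrict : ∀ j k : ℕ, j < k → k ≤ L.length → (L.take j).sum < (L.take k).sum := by
    intro j k hjk hk
    have hj : j < L.length := lt_of_lt_of_le hjk hk
    have h1 := List.sum_take_succ L j hj
    have h2 : 0 < L[j] := hpos _ (List.getElem_mem hj)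
    have h3 := htake_mono (j+1) k hjk
    linarith
  have hne : ∀ c : ℝ, 0 ≤ c → ((Finset.range (L.length + 1)).filter
      fun k => (L.take k).sum ≤ c).Nonempty := by
    intro c hc
    exact ⟨0, by simp [Finset.mem_filter, hc]⟩
  have hmain : ∀ c : ℝ, 0 ≤ c → ∀ hc : ((Finset.range (L.length + 1)).filter
        fun k => (L.take k).sum ≤ c).Nonempty,
      knapFnL I r q c =
        ((rv * ((((Finset.range (L.length + 1)).filter
          fun k => (L.take k).sum ≤ c).max' hc : ℕ) : ℝ) : ℝ) : EReal) := by
    intro c hc0 hc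
    set K := ((Finset.range (L.length + 1)).filter
      fun k => (L.take k).sum ≤ c).max' hc with hKdef
    have hKmem := Finset.max'_mem _ hc
    rw [Finset.mem_filter, Finset.mem_range] at hKmem
    obtain ⟨hKlt, hKsum⟩ := hKmem
    unfold knapFnL
    rw [if_neg (not_lt.2 hc0)]
    apply le_antisymm
    · apply Finset.sup_le
      intro S hS
      rw [Finset.mem_filter, Finset.mem_powerset] at hS
      obtain ⟨hSI, hSq⟩ := hS
      rw [hsumr S hSI]
      have hcard_le : S.card ≤ K := by
        rw [hKdef]
        apply Finset.le_max'
        rw [Finset.mem_filter, Finset.mem_range]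
        refine ⟨?_, le_trans (hpre S hSI) hSq⟩
        have := Finset.card_le_card hSI
        omega
      exact EReal.coe_le_coe_iff.2
        (mul_le_mul_of_nonneg_left (Nat.cast_le.2 hcard_le) hrv.le)
    · obtain ⟨S₀, hS₀I, hS₀card, hS₀sum⟩ := hex K (by omega)
      have hmem : S₀ ∈ I.powerset.filter fun S => (∑ i ∈ S, q i) ≤ c := by
        rw [Finset.mem_filter, Finset.mem_powerset]
        exact ⟨hS₀I, by rw [hS₀sum]; exact hKsum⟩
      have hle := Finset.le_sup (f := fun S => ((∑ i ∈ S, r i : ℝ) : EReal)) hmem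
      simp only [hsumr S₀ hS₀I, hS₀card] at hle
      exact hle
  have hmono : ∀ a b : ℝ, 0 ≤ a → a ≤ b → knapFnL I r q a ≤ knapFnL I r q b := by
    intro a b ha hab
    unfold knapFnL
    rw [if_neg (not_lt.2 ha), if_neg (not_lt.2 (ha.trans hab))]
    apply Finset.sup_mono
    intro S hS
    rw [Finset.mem_filter] at *
    exact ⟨hS.1, hS.2.trans hab⟩
  refine ⟨hmain, hmono, ?_, ?_⟩
  · ext v
    simp only [Set.mem_image, Set.mem_Ici, Set.mem_setOf_eq]
    constructor
    · rintro ⟨c, hc, rfl⟩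
      refine ⟨((Finset.range (L.length + 1)).filter
        fun k => (L.take k).sum ≤ c).max' (hne c hc), ?_, hmain c hc (hne c hc)⟩
      have := Finset.max'_mem _ (hne c hc)
      rw [Finset.mem_filter, Finset.mem_range] at this
      omega
    · rintro ⟨k, hk, rfl⟩
      refine ⟨(L.take k).sum, ?_, ?_⟩
      · exact List.sum_nonneg fun x hx => (hpos x (List.mem_of_mem_take hx)).le
      · have hc0 : (0:ℝ) ≤ (L.take k).sum :=
          List.sum_nonneg fun x hx => (hpos x (List.mem_of_mem_take hx)).le
        rw [hmain _ hc0 (hne _ hc0)]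
        have hmax : ((Finset.range (L.length + 1)).filter
            fun j => (L.take j).sum ≤ (L.take k).sum).max' (hne _ hc0) = k := by
          apply le_antisymm
          · apply Finset.max'_le
            intro j hj
            rw [Finset.mem_filter, Finset.mem_range] at hj
            by_contra hjk
            push_neg at hjk
            exact absurd hj.2 (not_le.2 (hstrict k j hjk (by omega)))
          · apply Finset.le_max'
            rw [Finset.mem_filter, Finset.mem_range]
            exact ⟨by omega, le_refl _⟩
        rw [hmax]
  · intro k hk
    have h1 := List.sum_take_succ L k (by omega)
    have h2 := List.sum_take_succ L (k+1) (by omega)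
    have h3 : L.get ⟨k, by omega⟩ ≤ L.get ⟨k+1, by omega⟩ :=
      hsort.rel_get_of_lt (by simp)
    simp only [List.get_eq_getElem] at h3
    linarith
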